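/- For every positive operator measure E : 𝒜 → L(H) and every measurable function f : Ω → ℂ, the set D(f,E) is a linear subspace of H (not necessarily dense), and there exists a unique linear operator L(f,E) with domain D(f,E) such that ⟨ψ, L(f,E)φ⟩ = ∫ f dE_{ψ,φ} for all ψ ∈ H and all φ ∈ D(f,E). -/

import Mathlib

open MeasureTheory Filter Topology ComplexConjugate

noncomputable section

local notation "⟪" x ", " y "⟫" => @inner ℂ _ _ x y

/-- The total variation measure of a complex measure. -/
def MeasureTheory.ComplexMeasure.tv {Ω : Type*} [MeasurableSpace Ω]
    (ν : MeasureTheory.ComplexMeasure Ω) : MeasureTheory.Measure Ω :=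
  (MeasureTheory.ComplexMeasure.re ν).totalVariation +
    (MeasureTheory.ComplexMeasure.im ν).totalVariation

/-- `f` is integrable with respect to the complex measure `ν`: it is integrable with respect
to the total variation measure of `ν`. -/
def MeasureTheory.ComplexMeasure.CIntegrable {Ω : Type*} [MeasurableSpace Ω]
    (ν : MeasureTheory.ComplexMeasure Ω) (f : Ω → ℂ) : Prop :=
  MeasureTheory.Integrable f ν.tv

/-- The integral of a complex function against a signed measure. -/
def MeasureTheory.SignedMeasure.cintegral {Ω : Type*} [MeasurableSpace Ω]
    (σ : MeasureTheory.SignedMeasure Ω) (f : Ω → ℂ) : ℂ :=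
  (∫ x, f x ∂σ.toJordanDecomposition.posPart) - ∫ x, f x ∂σ.toJordanDecomposition.negPart

/-- The integral of a complex function against a complex measure. -/
def MeasureTheory.ComplexMeasure.cintegral {Ω : Type*} [MeasurableSpace Ω]
    (ν : MeasureTheory.ComplexMeasure Ω) (f : Ω → ℂ) : ℂ :=
  (MeasureTheory.ComplexMeasure.re ν).cintegral f +
    Complex.I * (MeasureTheory.ComplexMeasure.im ν).cintegral f

open scoped ENNReal NNReal

namespace MeasureTheory.SignedMeasure


variable {Ω : Type*} [MeasurableSpace Ω]

lemma posPart_le_tv (s : SignedMeasure Ω) :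
    s.toJordanDecomposition.posPart ≤ s.totalVariation :=
  Measure.le_add_right le_rfl

lemma negPart_le_tv (s : SignedMeasure Ω) :
    s.toJordanDecomposition.negPart ≤ s.totalVariation :=
  Measure.le_add_left le_rfl

lemma apply_eq_toReal (s : SignedMeasure Ω) {B : Set Ω} (hB : MeasurableSet B) :
    s B = (s.toJordanDecomposition.posPart B).toReal
      - (s.toJordanDecomposition.negPart B).toReal := by
  conv_lhs => rw [← s.toSignedMeasure_toJordanDecomposition]
  rw [JordanDecomposition.toSignedMeasure, VectorMeasure.sub_apply,
    Measure.toSignedMeasure_apply_measurable hB, Measure.toSignedMeasure_apply_measurable hB]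
  rfl

lemma ofReal_apply_le_tv (s : SignedMeasure Ω) {B : Set Ω} (hB : MeasurableSet B) :
    ENNReal.ofReal (s B) ≤ s.totalVariation B := by
  rw [s.apply_eq_toReal hB]
  calc ENNReal.ofReal ((s.toJordanDecomposition.posPart B).toReal
        - (s.toJordanDecomposition.negPart B).toReal)
      ≤ ENNReal.ofReal (s.toJordanDecomposition.posPart B).toReal :=
        ENNReal.ofReal_le_ofReal (by simp [sub_le_self_iff, ENNReal.toReal_nonneg])
    _ = s.toJordanDecomposition.posPart B := ENNReal.ofReal_toReal (measure_ne_top _ _)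
    _ ≤ s.totalVariation B := s.posPart_le_tv B

lemma ofReal_neg_apply_le_tv (s : SignedMeasure Ω) {B : Set Ω} (hB : MeasurableSet B) :
    ENNReal.ofReal (-(s B)) ≤ s.totalVariation B := by
  have := (-s).ofReal_apply_le_tv hB
  rwa [VectorMeasure.neg_apply, totalVariation_neg] at this

lemma tv_add_le (s t : SignedMeasure Ω) :
    (s + t).totalVariation ≤ s.totalVariation + t.totalVariation := by
  rw [Measure.le_iff]
  intro A hA
  obtain ⟨i, hi₁, hi₂, hi₃, hpos, hneg⟩ := (s + t).toJordanDecomposition_spec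
  have hiA : MeasurableSet (i ∩ A) := hi₁.inter hA
  have hicA : MeasurableSet (iᶜ ∩ A) := hi₁.compl.inter hA
  have hposA : (s + t).toJordanDecomposition.posPart A
      ≤ s.totalVariation (i ∩ A) + t.totalVariation (i ∩ A) := by
    rw [hpos, toMeasureOfZeroLE_apply _ _ _ hA]
    rw [ENNReal.coe_nnreal_eq, NNReal.coe_mk, VectorMeasure.add_apply]
    exact le_trans ENNReal.ofReal_add_le
      (add_le_add (s.ofReal_apply_le_tv hiA) (t.ofReal_apply_le_tv hiA))
  have hnegA : (s + t).toJordanDecomposition.negPart A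
      ≤ s.totalVariation (iᶜ ∩ A) + t.totalVariation (iᶜ ∩ A) := by
    rw [hneg, toMeasureOfLEZero_apply _ _ _ hA]
    rw [ENNReal.coe_nnreal_eq, NNReal.coe_mk, VectorMeasure.add_apply, neg_add]
    exact le_trans ENNReal.ofReal_add_le
      (add_le_add (s.ofReal_neg_apply_le_tv hicA) (t.ofReal_neg_apply_le_tv hicA))
  have hsplit : ∀ μ : Measure Ω, μ (i ∩ A) + μ (iᶜ ∩ A) = μ A := by
    intro μ
    rw [Set.inter_comm i A, Set.inter_comm iᶜ A, ← Set.diff_eq]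
    exact measure_inter_add_diff A hi₁
  calc (s + t).totalVariation A
      = (s + t).toJordanDecomposition.posPart A + (s + t).toJordanDecomposition.negPart A := rfl
    _ ≤ (s.totalVariation (i ∩ A) + t.totalVariation (i ∩ A))
        + (s.totalVariation (iᶜ ∩ A) + t.totalVariation (iᶜ ∩ A)) := add_le_add hposA hnegA
    _ = (s.totalVariation (i ∩ A) + s.totalVariation (iᶜ ∩ A))
        + (t.totalVariation (i ∩ A) + t.totalVariation (iᶜ ∩ A)) := by ring
    _ = s.totalVariation A + t.totalVariation A := by rw [hsplit, hsplit]
    _ = (s.totalVariation + t.totalVariation) A := (Measure.add_apply _ _ _).symm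


-- J2: bound on total variation of univ
lemma tv_univ_le (s : SignedMeasure Ω) {M : ℝ}
    (hM : ∀ B : Set Ω, MeasurableSet B → |s B| ≤ M) :
    s.totalVariation Set.univ ≤ ENNReal.ofReal (2 * M) := by
  have hM0 : 0 ≤ M := le_trans (abs_nonneg _) (hM ∅ MeasurableSet.empty)
  obtain ⟨i, hi₁, hi₂, hi₃, hpos, hneg⟩ := s.toJordanDecomposition_spec
  have h1 : s.toJordanDecomposition.posPart Set.univ ≤ ENNReal.ofReal M := by
    rw [hpos, toMeasureOfZeroLE_apply _ _ _ MeasurableSet.univ, ENNReal.coe_nnreal_eq,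
      NNReal.coe_mk]
    exact ENNReal.ofReal_le_ofReal (le_trans (le_abs_self _) (hM _ (hi₁.inter .univ)))
  have h2 : s.toJordanDecomposition.negPart Set.univ ≤ ENNReal.ofReal M := by
    rw [hneg, toMeasureOfLEZero_apply _ _ _ MeasurableSet.univ, ENNReal.coe_nnreal_eq,
      NNReal.coe_mk]
    exact ENNReal.ofReal_le_ofReal (le_trans (neg_le_abs _) (hM _ (hi₁.compl.inter .univ)))
  calc s.totalVariation Set.univ
      = s.toJordanDecomposition.posPart Set.univ + s.toJordanDecomposition.negPart Set.univ := rfl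
    _ ≤ ENNReal.ofReal M + ENNReal.ofReal M := add_le_add h1 h2
    _ = ENNReal.ofReal (2 * M) := by rw [← ENNReal.ofReal_add hM0 hM0, two_mul]

variable {f : Ω → ℂ}

-- J6: norm bound on the integral
lemma norm_cintegral_le (s : SignedMeasure Ω) (hint : Integrable f s.totalVariation) :
    ‖s.cintegral f‖ ≤ ∫ x, ‖f x‖ ∂s.totalVariation := by
  have hp : Integrable f s.toJordanDecomposition.posPart :=
    hint.mono_measure (posPart_le_tv s)
  have hn : Integrable f s.toJordanDecomposition.negPart :=
    hint.mono_measure (negPart_le_tv s)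
  calc ‖s.cintegral f‖
      ≤ ‖∫ x, f x ∂s.toJordanDecomposition.posPart‖
        + ‖∫ x, f x ∂s.toJordanDecomposition.negPart‖ := norm_sub_le _ _
    _ ≤ (∫ x, ‖f x‖ ∂s.toJordanDecomposition.posPart)
        + ∫ x, ‖f x‖ ∂s.toJordanDecomposition.negPart :=
        add_le_add (norm_integral_le_integral_norm _) (norm_integral_le_integral_norm _)
    _ = ∫ x, ‖f x‖ ∂s.totalVariation := (integral_add_measure hp.norm hn.norm).symm

-- J8: negation
lemma cintegral_neg_measure (s : SignedMeasure Ω) :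
    (-s).cintegral f = -s.cintegral f := by
  unfold cintegral
  rw [toJordanDecomposition_neg]
  show (∫ x, f x ∂s.toJordanDecomposition.negPart) - ∫ x, f x ∂s.toJordanDecomposition.posPart = _
  ring

lemma posPart_smul_nonneg (s : SignedMeasure Ω) {r : ℝ} (hr : 0 ≤ r) :
    (r • s).toJordanDecomposition.posPart
      = (r.toNNReal : ℝ≥0∞) • s.toJordanDecomposition.posPart := by
  rw [toJordanDecomposition_smul_real, JordanDecomposition.real_smul_posPart_nonneg _ _ hr,
    ENNReal.smul_def]

lemma negPart_smul_nonneg (s : SignedMeasure Ω) {r : ℝ} (hr : 0 ≤ r) :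
    (r • s).toJordanDecomposition.negPart
      = (r.toNNReal : ℝ≥0∞) • s.toJordanDecomposition.negPart := by
  rw [toJordanDecomposition_smul_real, JordanDecomposition.real_smul_negPart_nonneg _ _ hr,
    ENNReal.smul_def]

-- J9/J10: real scalar multiplication
lemma cintegral_smul_nonneg (s : SignedMeasure Ω) {r : ℝ} (hr : 0 ≤ r) :
    (r • s).cintegral f = r * s.cintegral f := by
  unfold cintegral
  rw [posPart_smul_nonneg s hr, negPart_smul_nonneg s hr, integral_smul_measure,
    integral_smul_measure, ENNReal.coe_toReal, Real.coe_toNNReal r hr]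
  simp only [Complex.real_smul]
  ring

lemma cintegral_smul_measure (s : SignedMeasure Ω) (r : ℝ) :
    (r • s).cintegral f = r * s.cintegral f := by
  rcases le_or_gt 0 r with hr | hr
  · exact cintegral_smul_nonneg s hr
  · have h : r • s = -((-r) • s) := by ext i hi; simp
    rw [h, cintegral_neg_measure, cintegral_smul_nonneg s (by linarith : (0:ℝ) ≤ -r)]
    push_cast
    ring

lemma tv_smul_integrable_nonneg (s : SignedMeasure Ω) {r : ℝ} (hr : 0 ≤ r)
    (hint : Integrable f s.totalVariation) : Integrable f (r • s).totalVariation := by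
  have h : (r • s).totalVariation = (r.toNNReal : ℝ≥0∞) • s.totalVariation := by
    unfold totalVariation
    rw [posPart_smul_nonneg s hr, negPart_smul_nonneg s hr, smul_add]
  rw [h]
  exact hint.smul_measure ENNReal.coe_ne_top

lemma tv_smul_integrable (s : SignedMeasure Ω) (r : ℝ)
    (hint : Integrable f s.totalVariation) : Integrable f (r • s).totalVariation := by
  rcases le_or_gt 0 r with hr | hr
  · exact tv_smul_integrable_nonneg s hr hint
  · have h : r • s = -((-r) • s) := by ext i hi; simp
    rw [h, totalVariation_neg]
    exact tv_smul_integrable_nonneg s (by linarith : (0:ℝ) ≤ -r) hint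


-- key measure identity
lemma jordan_add_measure_eq (s t : SignedMeasure Ω) :
    (s + t).toJordanDecomposition.posPart + s.toJordanDecomposition.negPart
        + t.toJordanDecomposition.negPart
      = (s + t).toJordanDecomposition.negPart + s.toJordanDecomposition.posPart
        + t.toJordanDecomposition.posPart := by
  ext A hA
  simp only [Measure.coe_add, Pi.add_apply]
  have h1 := (s + t).apply_eq_toReal hA
  have h2 := s.apply_eq_toReal hA
  have h3 := t.apply_eq_toReal hA
  rw [VectorMeasure.add_apply] at h1
  have fin : ∀ (u : SignedMeasure Ω),
      u.toJordanDecomposition.posPart A ≠ ⊤ ∧ u.toJordanDecomposition.negPart A ≠ ⊤ :=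
    fun u => ⟨measure_ne_top _ _, measure_ne_top _ _⟩
  rw [← ENNReal.toReal_eq_toReal_iff' (by simp [ENNReal.add_ne_top, (fin _).1, (fin _).2])
    (by simp [ENNReal.add_ne_top, (fin _).1, (fin _).2])]
  rw [ENNReal.toReal_add (by simp [ENNReal.add_ne_top, (fin _).1, (fin _).2]) (fin t).2,
    ENNReal.toReal_add (fin (s+t)).1 (fin s).2,
    ENNReal.toReal_add (by simp [ENNReal.add_ne_top, (fin _).1, (fin _).2]) (fin t).1,
    ENNReal.toReal_add (fin (s+t)).2 (fin s).1]
  linarith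

lemma cintegral_add_measure (s t : SignedMeasure Ω)
    (hs : Integrable f s.totalVariation) (ht : Integrable f t.totalVariation) :
    (s + t).cintegral f = s.cintegral f + t.cintegral f := by
  have hst : Integrable f (s + t).totalVariation :=
    (hs.add_measure ht).mono_measure (tv_add_le s t)
  have hIp : ∀ (u : SignedMeasure Ω), Integrable f u.totalVariation →
      Integrable f u.toJordanDecomposition.posPart :=
    fun u hu => hu.mono_measure (posPart_le_tv u)
  have hIn : ∀ (u : SignedMeasure Ω), Integrable f u.totalVariation →
      Integrable f u.toJordanDecomposition.negPart :=
    fun u hu => hu.mono_measure (negPart_le_tv u)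
  have key := congrArg (fun μ : Measure Ω => ∫ x, f x ∂μ) (jordan_add_measure_eq s t)
  rw [integral_add_measure ((hIp _ hst).add_measure (hIn _ hs)) (hIn _ ht),
    integral_add_measure (hIp _ hst) (hIn _ hs),
    integral_add_measure ((hIn _ hst).add_measure (hIp _ hs)) (hIp _ ht),
    integral_add_measure (hIn _ hst) (hIp _ hs)] at key
  unfold cintegral
  linear_combination key


instance tv_isFiniteMeasure' (s : SignedMeasure Ω) : IsFiniteMeasure s.totalVariation := by
  unfold totalVariation; infer_instance

end MeasureTheory.SignedMeasure

namespace MeasureTheory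

variable {Ω : Type*} [MeasurableSpace Ω] {f : Ω → ℂ}

lemma trunc_meas (hf : Measurable f) (n : ℕ) :
    Measurable (Set.indicator {x : Ω | ‖f x‖ ≤ (n : ℝ)} f) :=
  hf.indicator (measurableSet_le hf.norm measurable_const)

lemma trunc_norm_le (n : ℕ) (x : Ω) :
    ‖Set.indicator {x : Ω | ‖f x‖ ≤ (n : ℝ)} f x‖ ≤ ‖f x‖ := by
  by_cases h : x ∈ {x : Ω | ‖f x‖ ≤ (n : ℝ)}
  · rw [Set.indicator_of_mem h]
  · rw [Set.indicator_of_notMem h]; simp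

lemma trunc_norm_le' (n : ℕ) (x : Ω) :
    ‖Set.indicator {x : Ω | ‖f x‖ ≤ (n : ℝ)} f x‖ ≤ (n : ℝ) := by
  by_cases h : x ∈ {x : Ω | ‖f x‖ ≤ (n : ℝ)}
  · rw [Set.indicator_of_mem h]; exact h
  · rw [Set.indicator_of_notMem h]; simp

lemma trunc_tendsto (x : Ω) :
    Tendsto (fun n : ℕ => Set.indicator {x : Ω | ‖f x‖ ≤ (n : ℝ)} f x) atTop (𝓝 (f x)) := by
  refine tendsto_const_nhds.congr' ?_
  filter_upwards [eventually_ge_atTop ⌈‖f x‖⌉₊] with n hn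
  have : x ∈ {x : Ω | ‖f x‖ ≤ (n : ℝ)} :=
    le_trans (Nat.le_ceil ‖f x‖) (Nat.cast_le.mpr hn)
  rw [Set.indicator_of_mem this]

lemma tendsto_integral_trunc (μ : Measure Ω) (hf : Measurable f) (hint : Integrable f μ) :
    Tendsto (fun n : ℕ => ∫ x, Set.indicator {x : Ω | ‖f x‖ ≤ (n : ℝ)} f x ∂μ)
      atTop (𝓝 (∫ x, f x ∂μ)) := by
  refine tendsto_integral_of_dominated_convergence (fun x => ‖f x‖)
    (fun n => (trunc_meas hf n).aestronglyMeasurable) hint.norm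
    (fun n => ae_of_all μ (trunc_norm_le n)) (ae_of_all μ trunc_tendsto)


lemma SignedMeasure.cintegral_tendsto_trunc (s : SignedMeasure Ω) (hf : Measurable f)
    (h : Integrable f s.totalVariation) :
    Tendsto (fun n : ℕ => s.cintegral (Set.indicator {x : Ω | ‖f x‖ ≤ (n : ℝ)} f))
      atTop (𝓝 (s.cintegral f)) :=
  (tendsto_integral_trunc _ hf (h.mono_measure (SignedMeasure.posPart_le_tv s))).sub
    (tendsto_integral_trunc _ hf (h.mono_measure (SignedMeasure.negPart_le_tv s)))

namespace ComplexMeasure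

instance tv_isFiniteMeasure (ν : ComplexMeasure Ω) : IsFiniteMeasure ν.tv := by
  unfold tv; infer_instance

lemma integrable_re (ν : ComplexMeasure Ω) (h : Integrable f ν.tv) :
    Integrable f (ComplexMeasure.re ν).totalVariation :=
  h.mono_measure (Measure.le_add_right le_rfl)

lemma integrable_im (ν : ComplexMeasure Ω) (h : Integrable f ν.tv) :
    Integrable f (ComplexMeasure.im ν).totalVariation :=
  h.mono_measure (Measure.le_add_left le_rfl)

lemma tv_add_integrable {ν₁ ν₂ : ComplexMeasure Ω} (h₁ : Integrable f ν₁.tv)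
    (h₂ : Integrable f ν₂.tv) : Integrable f (ν₁ + ν₂).tv := by
  refine ((h₁.add_measure h₂).mono_measure ?_)
  show (ν₁ + ν₂).tv ≤ ν₁.tv + ν₂.tv
  unfold tv
  rw [map_add ComplexMeasure.re ν₁ ν₂, map_add ComplexMeasure.im ν₁ ν₂]
  calc (ComplexMeasure.re ν₁ + ComplexMeasure.re ν₂).totalVariation
        + (ComplexMeasure.im ν₁ + ComplexMeasure.im ν₂).totalVariation
      ≤ ((ComplexMeasure.re ν₁).totalVariation + (ComplexMeasure.re ν₂).totalVariation)
        + ((ComplexMeasure.im ν₁).totalVariation + (ComplexMeasure.im ν₂).totalVariation) :=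
        add_le_add (SignedMeasure.tv_add_le _ _) (SignedMeasure.tv_add_le _ _)
    _ = _ := add_add_add_comm _ _ _ _

lemma re_csmul (c : ℂ) (ν : ComplexMeasure Ω) :
    ComplexMeasure.re (c • ν) = c.re • ComplexMeasure.re ν + (-c.im) • ComplexMeasure.im ν := by
  ext B hB
  simp only [re_apply, im_apply, VectorMeasure.smul_apply, VectorMeasure.add_apply,
    VectorMeasure.mapRange_apply, LinearMap.toAddMonoidHom_coe, Complex.reLm_coe, Complex.imLm_coe, smul_eq_mul, Complex.mul_re]
  show (c • ν B).re = c.re * (ν B).re + -c.im * (ν B).im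
  rw [smul_eq_mul, Complex.mul_re]
  ring

lemma im_csmul (c : ℂ) (ν : ComplexMeasure Ω) :
    ComplexMeasure.im (c • ν) = c.im • ComplexMeasure.re ν + c.re • ComplexMeasure.im ν := by
  ext B hB
  simp only [re_apply, im_apply, VectorMeasure.smul_apply, VectorMeasure.add_apply,
    VectorMeasure.mapRange_apply, LinearMap.toAddMonoidHom_coe, Complex.reLm_coe, Complex.imLm_coe, smul_eq_mul, Complex.mul_im]
  show (c • ν B).im = c.im * (ν B).re + c.re * (ν B).im
  rw [smul_eq_mul, Complex.mul_im]
  ring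

lemma tv_smul_integrable (c : ℂ) {ν : ComplexMeasure Ω} (h : Integrable f ν.tv) :
    Integrable f (c • ν).tv := by
  unfold tv
  rw [re_csmul, im_csmul]
  refine integrable_add_measure.mpr ⟨?_, ?_⟩
  · refine (((SignedMeasure.tv_smul_integrable _ c.re (integrable_re ν h)).add_measure
      (SignedMeasure.tv_smul_integrable _ (-c.im) (integrable_im ν h))).mono_measure
      (SignedMeasure.tv_add_le _ _))
  · refine (((SignedMeasure.tv_smul_integrable _ c.im (integrable_re ν h)).add_measure
      (SignedMeasure.tv_smul_integrable _ c.re (integrable_im ν h))).mono_measure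
      (SignedMeasure.tv_add_le _ _))

lemma cintegral_add_measure {ν₁ ν₂ : ComplexMeasure Ω} (h₁ : Integrable f ν₁.tv)
    (h₂ : Integrable f ν₂.tv) :
    (ν₁ + ν₂).cintegral f = ν₁.cintegral f + ν₂.cintegral f := by
  unfold cintegral
  rw [map_add ComplexMeasure.re ν₁ ν₂, map_add ComplexMeasure.im ν₁ ν₂,
    SignedMeasure.cintegral_add_measure _ _ (integrable_re ν₁ h₁) (integrable_re ν₂ h₂),
    SignedMeasure.cintegral_add_measure _ _ (integrable_im ν₁ h₁) (integrable_im ν₂ h₂)]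
  ring

lemma cintegral_smul (c : ℂ) {ν : ComplexMeasure Ω} (h : Integrable f ν.tv) :
    (c • ν).cintegral f = c * ν.cintegral f := by
  unfold cintegral
  rw [re_csmul, im_csmul,
    SignedMeasure.cintegral_add_measure _ _
      (SignedMeasure.tv_smul_integrable _ c.re (integrable_re ν h))
      (SignedMeasure.tv_smul_integrable _ (-c.im) (integrable_im ν h)),
    SignedMeasure.cintegral_add_measure _ _
      (SignedMeasure.tv_smul_integrable _ c.im (integrable_re ν h))
      (SignedMeasure.tv_smul_integrable _ c.re (integrable_im ν h)),
    SignedMeasure.cintegral_smul_measure, SignedMeasure.cintegral_smul_measure,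
    SignedMeasure.cintegral_smul_measure, SignedMeasure.cintegral_smul_measure]
  have h1 : ((-c.im : ℝ) : ℂ) = -(c.im : ℂ) := by push_cast; ring
  rw [h1]
  linear_combination ((ComplexMeasure.re ν).cintegral f
      + Complex.I * (ComplexMeasure.im ν).cintegral f) * (Complex.re_add_im c)
    - (ComplexMeasure.im ν).cintegral f * c.im * Complex.I_sq

lemma norm_cintegral_le (ν : ComplexMeasure Ω) (h : Integrable f ν.tv) :
    ‖ν.cintegral f‖ ≤ ∫ x, ‖f x‖ ∂ν.tv := by
  calc ‖ν.cintegral f‖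
      ≤ ‖(ComplexMeasure.re ν).cintegral f‖
        + ‖Complex.I * (ComplexMeasure.im ν).cintegral f‖ := norm_add_le _ _
    _ = ‖(ComplexMeasure.re ν).cintegral f‖ + ‖(ComplexMeasure.im ν).cintegral f‖ := by
        rw [norm_mul, Complex.norm_I, one_mul]
    _ ≤ (∫ x, ‖f x‖ ∂(ComplexMeasure.re ν).totalVariation)
        + ∫ x, ‖f x‖ ∂(ComplexMeasure.im ν).totalVariation :=
        add_le_add (SignedMeasure.norm_cintegral_le _ (integrable_re ν h))
          (SignedMeasure.norm_cintegral_le _ (integrable_im ν h))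
    _ = ∫ x, ‖f x‖ ∂ν.tv :=
        (integral_add_measure (integrable_re ν h).norm (integrable_im ν h).norm).symm


lemma cintegral_tendsto_trunc (ν : ComplexMeasure Ω) (hf : Measurable f)
    (h : Integrable f ν.tv) :
    Tendsto (fun n : ℕ => ν.cintegral (Set.indicator {x : Ω | ‖f x‖ ≤ (n : ℝ)} f))
      atTop (𝓝 (ν.cintegral f)) :=
  ((ComplexMeasure.re ν).cintegral_tendsto_trunc hf (integrable_re ν h)).add
    (((ComplexMeasure.im ν).cintegral_tendsto_trunc hf (integrable_im ν h)).const_mul Complex.I)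

end ComplexMeasure

end MeasureTheory

/-- For every positive operator measure `E` (with associated complex measures
`ν ψ φ = ⟨ψ, E(·)φ⟩`) and every measurable `f : Ω → ℂ`, the set `D(f,E)` is a linear subspace
of `H`, and there is a unique linear operator `L(f,E)` on it with
`⟨ψ, L(f,E)φ⟩ = ∫ f dE_{ψ,φ}` for all `ψ ∈ H`, `φ ∈ D(f,E)`. -/
theorem stmt0 {Ω : Type*} [MeasurableSpace Ω] {H : Type*} [NormedAddCommGroup H]
    [InnerProductSpace ℂ H] [CompleteSpace H]
    (E : Set Ω → H →L[ℂ] H) (hEpos : ∀ B : Set Ω, MeasurableSet B → (E B).IsPositive)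
    (ν : H → H → MeasureTheory.ComplexMeasure Ω)
    (hν : ∀ (ψ φ : H) (B : Set Ω), MeasurableSet B → ν ψ φ B = ⟪ψ, E B φ⟫)
    (f : Ω → ℂ) (hf : Measurable f) :
    ∃ D : Submodule ℂ H,
      (D : Set H) = {φ : H | ∀ ψ : H, (ν ψ φ).CIntegrable f} ∧
      ∃! L : D →ₗ[ℂ] H, ∀ (φ : D) (ψ : H), ⟪ψ, L φ⟫ = (ν ψ (φ : H)).cintegral f := by
  classical
  -- linearity of ν in each argument
  have νadd_right : ∀ (ψ φ₁ φ₂ : H), ν ψ (φ₁ + φ₂) = ν ψ φ₁ + ν ψ φ₂ := by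
    intro ψ φ₁ φ₂
    ext B hB
    rw [VectorMeasure.add_apply, hν _ _ B hB, hν _ _ B hB, hν _ _ B hB, map_add,
      inner_add_right]
  have νsmul_right : ∀ (c : ℂ) (ψ φ : H), ν ψ (c • φ) = c • ν ψ φ := by
    intro c ψ φ
    ext B hB
    rw [VectorMeasure.smul_apply, hν _ _ B hB, hν _ _ B hB, ContinuousLinearMap.map_smul,
      inner_smul_right, smul_eq_mul]
  have νadd_left : ∀ (ψ₁ ψ₂ φ : H), ν (ψ₁ + ψ₂) φ = ν ψ₁ φ + ν ψ₂ φ := by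
    intro ψ₁ ψ₂ φ
    ext B hB
    rw [VectorMeasure.add_apply, hν _ _ B hB, hν _ _ B hB, hν _ _ B hB, inner_add_left]
  have νsmul_left : ∀ (c : ℂ) (ψ φ : H), ν (c • ψ) φ = (conj c) • ν ψ φ := by
    intro c ψ φ
    ext B hB
    rw [VectorMeasure.smul_apply, hν _ _ B hB, hν _ _ B hB, inner_smul_left, smul_eq_mul]
  have νzero_right : ∀ ψ : H, ν ψ 0 = 0 := by
    intro ψ
    ext B hB
    rw [hν _ _ B hB, VectorMeasure.zero_apply, map_zero, inner_zero_right]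
  -- quadratic bound
  have hquad : ∀ (B : Set Ω), MeasurableSet B → ∀ u : H,
      ‖⟪(E B) u, u⟫‖ ≤ ‖E Set.univ‖ * ‖u‖ ^ 2 := by
    intro B hB u
    set z := ⟪(E B) u, u⟫ with hzdef
    have hsa : (E B).adjoint = E B := (hEpos B hB).isSelfAdjoint.adjoint_eq
    have hz : z = ⟪u, (E B) u⟫ := by
      conv_lhs => rw [hzdef, ← hsa]
      rw [ContinuousLinearMap.adjoint_inner_left]
    have him : z.im = 0 := by
      have h1 : conj z = z := by
        conv_lhs => rw [hz, ← inner_conj_symm]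
        simp [hzdef]
      have := congrArg Complex.im h1
      simp [Complex.conj_im] at this
      linarith
    have hre : 0 ≤ z.re := by
      have := (hEpos B hB).2 u
      simpa [ContinuousLinearMap.reApplyInnerSelf, hzdef] using this
    have hmono : z.re ≤ (⟪u, E Set.univ u⟫).re := by
      have hU : (ν u u) Set.univ = (ν u u) B + (ν u u) Bᶜ := by
        rw [← Set.union_compl_self B]
        exact VectorMeasure.of_union disjoint_compl_right hB hB.compl
      rw [hν _ _ _ MeasurableSet.univ, hν _ _ B hB, hν _ _ Bᶜ hB.compl] at hU
      have h3 : 0 ≤ (⟪u, E Bᶜ u⟫).re := by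
        have := (hEpos Bᶜ hB.compl).2 u
        have h4 : (⟪(E Bᶜ) u, u⟫).re = (⟪u, (E Bᶜ) u⟫).re := by
          have h5 : (⟪(E Bᶜ) u, u⟫) = conj (⟪u, (E Bᶜ) u⟫) := (inner_conj_symm _ _).symm
          rw [h5, Complex.conj_re]
        simpa [ContinuousLinearMap.reApplyInnerSelf, h4] using this
      have := congrArg Complex.re hU
      rw [Complex.add_re] at this
      rw [hz]
      linarith
    have hnorm : (⟪u, E Set.univ u⟫).re ≤ ‖E Set.univ‖ * ‖u‖ ^ 2 := by
      calc (⟪u, E Set.univ u⟫).re ≤ ‖⟪u, E Set.univ u⟫‖ := Complex.re_le_norm _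
        _ ≤ ‖u‖ * ‖(E Set.univ) u‖ := norm_inner_le_norm _ _
        _ ≤ ‖u‖ * (‖E Set.univ‖ * ‖u‖) := by
            gcongr; exact (E Set.univ).le_opNorm u
        _ = ‖E Set.univ‖ * ‖u‖ ^ 2 := by ring
    have hzre : z = (z.re : ℂ) := Complex.ext rfl (by simp [him])
    calc ‖z‖ = |z.re| := by rw [hzre]; simp
      _ = z.re := abs_of_nonneg hre
      _ ≤ _ := le_trans hmono hnorm
  -- polarization bound on the complex measure values
  have hbB : ∀ (ψ φ : H) (B : Set Ω), MeasurableSet B →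
      ‖(ν ψ φ) B‖ ≤ ‖E Set.univ‖ * (‖ψ‖ + ‖φ‖) ^ 2 := by
    intro ψ φ B hB
    rw [hν _ _ B hB]
    have hflip : ‖⟪ψ, (E B) φ⟫‖ = ‖⟪(E B) φ, ψ⟫‖ := by
      rw [← inner_conj_symm ψ ((E B) φ)]
      exact RCLike.norm_conj _
    rw [hflip]
    have hpol := inner_map_polarization ((E B) : H →ₗ[ℂ] H) ψ φ
    simp only [ContinuousLinearMap.coe_coe] at hpol
    rw [hpol]
    set C := ‖E Set.univ‖ * (‖ψ‖ + ‖φ‖) ^ 2 with hC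
    have hCq : ∀ u : H, ‖u‖ ≤ ‖ψ‖ + ‖φ‖ → ‖⟪(E B) u, u⟫‖ ≤ C := by
      intro u hu
      refine le_trans (hquad B hB u) ?_
      have h0 : (0:ℝ) ≤ ‖E Set.univ‖ := norm_nonneg _
      have h1 : ‖u‖ ^ 2 ≤ (‖ψ‖ + ‖φ‖) ^ 2 := by
        have := norm_nonneg u
        nlinarith
      rw [hC]; nlinarith
    have hIφ : ‖Complex.I • φ‖ = ‖φ‖ := by
      rw [norm_smul, Complex.norm_I, one_mul]
    have e1 := hCq (ψ + φ) (norm_add_le _ _)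
    have e2 := hCq (ψ - φ) (norm_sub_le _ _)
    have e3 := hCq (ψ + Complex.I • φ) (le_trans (norm_add_le _ _) (by rw [hIφ]))
    have e4 := hCq (ψ - Complex.I • φ) (le_trans (norm_sub_le _ _) (by rw [hIφ]))
    have hden : ‖((4:ℂ))‖ = 4 := by norm_num
    calc ‖(⟪(E B) (ψ + φ), ψ + φ⟫ - ⟪(E B) (ψ - φ), ψ - φ⟫ +
            Complex.I * ⟪(E B) (ψ + Complex.I • φ), ψ + Complex.I • φ⟫ -
            Complex.I * ⟪(E B) (ψ - Complex.I • φ), ψ - Complex.I • φ⟫) / 4‖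
        = ‖⟪(E B) (ψ + φ), ψ + φ⟫ - ⟪(E B) (ψ - φ), ψ - φ⟫ +
            Complex.I * ⟪(E B) (ψ + Complex.I • φ), ψ + Complex.I • φ⟫ -
            Complex.I * ⟪(E B) (ψ - Complex.I • φ), ψ - Complex.I • φ⟫‖ / 4 := by
          rw [norm_div, hden]
      _ ≤ (C + C + C + C) / 4 := by
          gcongr
          refine le_trans (norm_sub_le _ _) ?_
          refine add_le_add (le_trans (norm_add_le _ _) ?_) ?_
          · exact add_le_add (le_trans (norm_sub_le _ _) (add_le_add e1 e2))
              (by rw [norm_mul, Complex.norm_I, one_mul]; exact e3)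
          · rw [norm_mul, Complex.norm_I, one_mul]; exact e4
      _ = C := by ring
  -- total variation bound
  have htv : ∀ ψ φ : H, (ν ψ φ).tv Set.univ
      ≤ ENNReal.ofReal (4 * (‖E Set.univ‖ * (‖ψ‖ + ‖φ‖) ^ 2)) := by
    intro ψ φ
    set M := ‖E Set.univ‖ * (‖ψ‖ + ‖φ‖) ^ 2 with hM
    have hM0 : (0:ℝ) ≤ M := by positivity
    have hre : ∀ B : Set Ω, MeasurableSet B → |(ComplexMeasure.re (ν ψ φ)) B| ≤ M := by
      intro B hB
      rw [ComplexMeasure.re_apply]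
      exact le_trans (Complex.abs_re_le_norm _) (hbB ψ φ B hB)
    have him' : ∀ B : Set Ω, MeasurableSet B → |(ComplexMeasure.im (ν ψ φ)) B| ≤ M := by
      intro B hB
      rw [ComplexMeasure.im_apply]
      exact le_trans (Complex.abs_im_le_norm _) (hbB ψ φ B hB)
    calc (ν ψ φ).tv Set.univ
        = (ComplexMeasure.re (ν ψ φ)).totalVariation Set.univ
          + (ComplexMeasure.im (ν ψ φ)).totalVariation Set.univ := rfl
      _ ≤ ENNReal.ofReal (2 * M) + ENNReal.ofReal (2 * M) :=
          add_le_add (SignedMeasure.tv_univ_le _ hre) (SignedMeasure.tv_univ_le _ him')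
      _ = ENNReal.ofReal (4 * M) := by
          rw [← ENNReal.ofReal_add (by linarith) (by linarith)]; ring_nf
  -- truncations are integrable against every ν ψ φ
  have htrunc : ∀ (n : ℕ) (μ : ComplexMeasure Ω),
      Integrable (Set.indicator {x : Ω | ‖f x‖ ≤ (n : ℝ)} f) μ.tv := by
    intro n μ
    exact ⟨(trunc_meas hf n).aestronglyMeasurable,
      HasFiniteIntegral.of_bounded (ae_of_all _ (trunc_norm_le' n))⟩
  -- scaling lemma
  have hscale : ∀ (S : H →ₗ[ℂ] ℂ) (C : ℝ), 0 ≤ C → (∀ u : H, ‖u‖ = 1 → ‖S u‖ ≤ C) →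
      ∀ ψ : H, ‖S ψ‖ ≤ C * ‖ψ‖ := by
    intro S C hC hSu ψ
    rcases eq_or_ne ψ 0 with h0 | h0
    · simp [h0, map_zero]
    · have hn0 : ‖ψ‖ ≠ 0 := norm_ne_zero_iff.mpr h0
      set u : H := ((‖ψ‖ : ℂ))⁻¹ • ψ with hu
      have hun : ‖u‖ = 1 := by
        rw [hu, norm_smul, norm_inv, Complex.norm_real, norm_norm]
        field_simp
      have hψu : ψ = ((‖ψ‖ : ℂ)) • u := by
        rw [hu, smul_smul, mul_inv_cancel₀ (by exact_mod_cast hn0), one_smul]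
      calc ‖S ψ‖ = ‖S (((‖ψ‖ : ℂ)) • u)‖ := by rw [← hψu]
        _ = ‖ψ‖ * ‖S u‖ := by
            rw [LinearMap.map_smul, smul_eq_mul, norm_mul, Complex.norm_real, norm_norm]
        _ ≤ ‖ψ‖ * C := mul_le_mul_of_nonneg_left (hSu u hun) (norm_nonneg ψ)
        _ = C * ‖ψ‖ := mul_comm _ _
  -- the key existence statement
  have key : ∀ φ : H, (∀ ψ : H, (ν ψ φ).CIntegrable f) →
      ∃ w : H, ∀ ψ : H, ⟪ψ, w⟫ = (ν ψ φ).cintegral f := by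
    intro φ hφ
    -- the conjugated functional
    set glin : H →ₗ[ℂ] ℂ :=
      { toFun := fun ψ => conj ((ν ψ φ).cintegral f)
        map_add' := fun ψ₁ ψ₂ => by
          rw [νadd_left, ComplexMeasure.cintegral_add_measure (hφ ψ₁) (hφ ψ₂), map_add]
        map_smul' := fun c ψ => by
          rw [νsmul_left, ComplexMeasure.cintegral_smul _ (hφ ψ), map_mul, Complex.conj_conj]
          simp } with hglin
    -- truncated functionals
    set Snlin : ℕ → (H →ₗ[ℂ] ℂ) := fun n =>
      { toFun := fun ψ => conj ((ν ψ φ).cintegral (Set.indicator {x : Ω | ‖f x‖ ≤ (n : ℝ)} f))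
        map_add' := fun ψ₁ ψ₂ => by
          rw [νadd_left, ComplexMeasure.cintegral_add_measure (htrunc n _) (htrunc n _), map_add]
        map_smul' := fun c ψ => by
          rw [νsmul_left, ComplexMeasure.cintegral_smul _ (htrunc n _), map_mul,
            Complex.conj_conj]
          simp } with hSnlin
    have hSn' : ∀ (n : ℕ) (ψ : H),
        ‖Snlin n ψ‖ ≤ (n : ℝ) * (4 * (‖E Set.univ‖ * (‖ψ‖ + ‖φ‖) ^ 2)) := by
      intro n ψ
      have h1 : ‖Snlin n ψ‖
          = ‖(ν ψ φ).cintegral (Set.indicator {x : Ω | ‖f x‖ ≤ (n : ℝ)} f)‖ := by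
        rw [hSnlin]
        exact RCLike.norm_conj _
      rw [h1]
      refine le_trans (ComplexMeasure.norm_cintegral_le _ (htrunc n _)) ?_
      have h2 : (∫ x, ‖Set.indicator {x : Ω | ‖f x‖ ≤ (n : ℝ)} f x‖ ∂(ν ψ φ).tv)
          ≤ ∫ _x, (n : ℝ) ∂(ν ψ φ).tv :=
        integral_mono (htrunc n _).norm (integrable_const _) (trunc_norm_le' n)
      refine le_trans h2 ?_
      rw [integral_const, smul_eq_mul, measureReal_def]
      have h3 : ((ν ψ φ).tv Set.univ).toReal ≤ 4 * (‖E Set.univ‖ * (‖ψ‖ + ‖φ‖) ^ 2) :=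
        ENNReal.toReal_le_of_le_ofReal (by positivity) (htv ψ φ)
      have h4 : (0:ℝ) ≤ (n : ℝ) := Nat.cast_nonneg n
      nlinarith [ENNReal.toReal_nonneg (a := (ν ψ φ).tv Set.univ)]
    set Sn : ℕ → (H →L[ℂ] ℂ) := fun n =>
      (Snlin n).mkContinuousOfExistsBound
        ⟨(n : ℝ) * (4 * (‖E Set.univ‖ * (1 + ‖φ‖) ^ 2)), by
          refine hscale _ _ (by positivity) ?_
          intro u hu
          have := hSn' n u
          rwa [hu] at this⟩ with hSn
    have hSnapp : ∀ (n : ℕ) (ψ : H), Sn n ψ = Snlin n ψ := fun _ _ => rfl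
    have hconv : ∀ ψ : H, Tendsto (fun n => Sn n ψ) atTop (𝓝 (glin ψ)) := by
      intro ψ
      have h := ComplexMeasure.cintegral_tendsto_trunc (ν ψ φ) hf (hφ ψ)
      have hc : Continuous (conj : ℂ → ℂ) := Complex.continuous_conj
      exact (hc.tendsto _).comp h
    have hptbdd : ∀ ψ : H, ∃ C : ℝ, ∀ n : ℕ, ‖Sn n ψ‖ ≤ C := by
      intro ψ
      have hb : BddAbove (Set.range fun n => ‖Sn n ψ‖) :=
        ((hconv ψ).norm).bddAbove_range
      obtain ⟨C, hC⟩ := hb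
      exact ⟨C, fun n => hC ⟨n, rfl⟩⟩
    obtain ⟨C', hC'⟩ := banach_steinhaus hptbdd
    have hgb : ∀ ψ : H, ‖glin ψ‖ ≤ C' * ‖ψ‖ := by
      intro ψ
      refine le_of_tendsto ((hconv ψ).norm) (Eventually.of_forall fun n => ?_)
      exact le_trans ((Sn n).le_opNorm ψ)
        (mul_le_mul_of_nonneg_right (hC' n) (norm_nonneg ψ))
    set gCLM : H →L[ℂ] ℂ := glin.mkContinuousOfExistsBound ⟨C', hgb⟩ with hgCLM
    refine ⟨(InnerProductSpace.toDual ℂ H).symm gCLM, fun ψ => ?_⟩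
    have h1 : ⟪(InnerProductSpace.toDual ℂ H).symm gCLM, ψ⟫ = gCLM ψ :=
      InnerProductSpace.toDual_symm_apply
    have h2 : ⟪ψ, (InnerProductSpace.toDual ℂ H).symm gCLM⟫
        = conj ⟪(InnerProductSpace.toDual ℂ H).symm gCLM, ψ⟫ := (inner_conj_symm _ _).symm
    rw [h2, h1]
    show conj (glin ψ) = _
    rw [hglin]
    exact Complex.conj_conj _
  -- the domain submodule
  refine ⟨{ carrier := {φ : H | ∀ ψ : H, (ν ψ φ).CIntegrable f}
            add_mem' := fun {a b} ha hb ψ => by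
              rw [νadd_right]
              exact ComplexMeasure.tv_add_integrable (ha ψ) (hb ψ)
            zero_mem' := fun ψ => by
              rw [νzero_right]
              show Integrable f (0 : ComplexMeasure Ω).tv
              have h0 : (0 : ComplexMeasure Ω).tv = 0 := by
                show (ComplexMeasure.re 0).totalVariation + (ComplexMeasure.im 0).totalVariation
                  = 0
                rw [map_zero, map_zero, SignedMeasure.totalVariation_zero]
                simp
              rw [h0]
              exact integrable_zero_measure
            smul_mem' := fun c a ha ψ => by
              rw [νsmul_right]
              exact ComplexMeasure.tv_smul_integrable c (ha ψ) }, rfl, ?_⟩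
  set D : Submodule ℂ H :=
    { carrier := {φ : H | ∀ ψ : H, (ν ψ φ).CIntegrable f}
      add_mem' := fun {a b} ha hb ψ => by
        rw [νadd_right]
        exact ComplexMeasure.tv_add_integrable (ha ψ) (hb ψ)
      zero_mem' := fun ψ => by
        rw [νzero_right]
        show Integrable f (0 : ComplexMeasure Ω).tv
        have h0 : (0 : ComplexMeasure Ω).tv = 0 := by
          show (ComplexMeasure.re 0).totalVariation + (ComplexMeasure.im 0).totalVariation = 0
          rw [map_zero, map_zero, SignedMeasure.totalVariation_zero]
          simp
        rw [h0]
        exact integrable_zero_measure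
      smul_mem' := fun c a ha ψ => by
        rw [νsmul_right]
        exact ComplexMeasure.tv_smul_integrable c (ha ψ) } with hD
  have hmem : ∀ φ : D, ∀ ψ : H, (ν ψ (φ : H)).CIntegrable f := fun φ => φ.2
  set L : D →ₗ[ℂ] H :=
    { toFun := fun φ => (key φ.1 (hmem φ)).choose
      map_add' := fun φ₁ φ₂ => by
        apply ext_inner_left ℂ
        intro ψ
        rw [(key _ (hmem (φ₁ + φ₂))).choose_spec ψ, inner_add_right,
          (key _ (hmem φ₁)).choose_spec ψ, (key _ (hmem φ₂)).choose_spec ψ,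
          Submodule.coe_add, νadd_right,
          ComplexMeasure.cintegral_add_measure (hmem φ₁ ψ) (hmem φ₂ ψ)]
      map_smul' := fun c φ => by
        apply ext_inner_left ℂ
        intro ψ
        rw [RingHom.id_apply, (key _ (hmem (c • φ))).choose_spec ψ, inner_smul_right,
          (key _ (hmem φ)).choose_spec ψ, Submodule.coe_smul, νsmul_right,
          ComplexMeasure.cintegral_smul c (hmem φ ψ)] } with hL
  refine ⟨L, fun φ ψ => (key φ.1 (hmem φ)).choose_spec ψ, ?_⟩
  intro L' hL'
  apply LinearMap.ext
  intro φ
  apply ext_inner_left ℂ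
  intro ψ
  rw [hL' φ ψ]
  exact ((key φ.1 (hmem φ)).choose_spec ψ).symm
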